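/- Let X and Y be Banach spaces, let T : Y → X be a bounded linear operator, and suppose T* (the adjoint of T, from X* to Y*) is injective. If Y* is strictly convex, then the norm on X* defined by |x*| := ‖x*‖ + ‖T* x*‖ is an equivalent strictly convex norm on X*. -/

import Mathlib

open NormedSpace

/-- The adjoint `T* : X* → Y*` of a bounded operator `T : Y → X`. -/
noncomputable def adj {Y X : Type*} [SeminormedAddCommGroup Y] [NormedSpace ℝ Y]
    [SeminormedAddCommGroup X] [NormedSpace ℝ X] (T : Y →L[ℝ] X) :
    StrongDual ℝ X →L[ℝ] StrongDual ℝ Y :=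
  LinearMap.mkContinuous
    { toFun := fun f => f.comp T
      map_add' := fun f g => by ext y; simp
      map_smul' := fun c f => by ext y; simp }
    ‖T‖ (fun f => by simpa [mul_comm] using f.opNorm_comp_le T)

/-- If `T* ` is injective and `Y*` is strictly convex, then
`|x*| := ‖x*‖ + ‖T* x*‖` is an equivalent strictly convex norm on `X*`. -/
theorem renorm_dual_strictly_convex {X Y : Type*}
    [NormedAddCommGroup X] [NormedSpace ℝ X] [CompleteSpace X]
    [NormedAddCommGroup Y] [NormedSpace ℝ Y] [CompleteSpace Y]
    (T : Y →L[ℝ] X) (hinj : Function.Injective (adj T))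
    [StrictConvexSpace ℝ (StrongDual ℝ Y)] :
    (∀ f g : StrongDual ℝ X,
        ‖f + g‖ + ‖adj T (f + g)‖ ≤ (‖f‖ + ‖adj T f‖) + (‖g‖ + ‖adj T g‖)) ∧
    (∀ (c : ℝ) (f : StrongDual ℝ X),
        ‖c • f‖ + ‖adj T (c • f)‖ = |c| * (‖f‖ + ‖adj T f‖)) ∧
    (∀ f : StrongDual ℝ X,
        ‖f‖ ≤ ‖f‖ + ‖adj T f‖ ∧ ‖f‖ + ‖adj T f‖ ≤ (1 + ‖T‖) * ‖f‖) ∧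
    (∀ f g : StrongDual ℝ X, ‖f‖ + ‖adj T f‖ = 1 → ‖g‖ + ‖adj T g‖ = 1 →
        ‖f + g‖ + ‖adj T (f + g)‖ = 2 → f = g) := by
  have hbound : ∀ f : StrongDual ℝ X, ‖adj T f‖ ≤ ‖T‖ * ‖f‖ := fun f => by
    show ‖f.comp T‖ ≤ _
    simpa [mul_comm] using f.opNorm_comp_le T
  refine ⟨?_, ?_, ?_, ?_⟩
  · intro f g
    have h1 : ‖f + g‖ ≤ ‖f‖ + ‖g‖ := norm_add_le f g
    have h2 : ‖adj T (f + g)‖ ≤ ‖adj T f‖ + ‖adj T g‖ := by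
      rw [map_add]; exact norm_add_le _ _
    linarith
  · intro c f
    rw [map_smul, norm_smul, norm_smul, Real.norm_eq_abs]; ring
  · intro f
    constructor
    · have := norm_nonneg (adj T f); linarith
    · have := hbound f; nlinarith [norm_nonneg f]
  · intro f g hf hg hfg
    have h1 : ‖f + g‖ ≤ ‖f‖ + ‖g‖ := norm_add_le f g
    have h2 : ‖adj T (f + g)‖ ≤ ‖adj T f‖ + ‖adj T g‖ := by
      rw [map_add]; exact norm_add_le _ _
    have heq : ‖adj T f + adj T g‖ = ‖adj T f‖ + ‖adj T g‖ := by
      rw [← map_add]; linarith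
    have hray : SameRay ℝ (adj T f) (adj T g) := by
      rw [sameRay_iff_norm_add]; exact heq
    have hf0 : adj T f ≠ 0 := by
      intro h
      have : f = 0 := hinj (by simpa using h)
      rw [this] at hf; simp at hf
    have hg0 : adj T g ≠ 0 := by
      intro h
      have : g = 0 := hinj (by simpa using h)
      rw [this] at hg; simp at hg
    rcases hray.exists_pos hf0 hg0 with ⟨r, s, hr, hs, hrs⟩
    have : r • f = s • g := by
      apply hinj
      rw [map_smul, map_smul]; exact hrs
    have hfg2 : f = (s / r) • g := by
      have := congrArg (fun x => (r⁻¹ : ℝ) • x) this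
      simpa [smul_smul, inv_mul_cancel₀ hr.ne', div_eq_inv_mul] using this
    have ht : (0:ℝ) < s / r := div_pos hs hr
    have hn : ‖(s / r) • g‖ + ‖adj T ((s / r) • g)‖ = (s / r) * (‖g‖ + ‖adj T g‖) := by
      rw [map_smul, norm_smul, norm_smul, Real.norm_eq_abs, abs_of_pos ht]; ring
    have : s / r = 1 := by
      rw [← hfg2, hf, hg, mul_one] at hn; exact hn.symm ▸ hn
    rw [hfg2, this, one_smul]
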